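/- The radius s_m of the largest ball centered at the origin contained in C_m = conv(B_m) satisfies s_m = (Σ_{k=1}^m 1/(√k + √(k−1))²)^{-1/2}. -/

import Mathlib

open scoped BigOperators
noncomputable section

section Aux

open Finset Real

lemma sqrt_gap {a b : ℝ} (hb : 0 ≤ b) (h : b ≤ a) :
    Real.sqrt (a+1) - Real.sqrt a ≤ Real.sqrt (b+1) - Real.sqrt b := by
  have ha : 0 ≤ a := hb.trans h
  have hp : Real.sqrt b ^ 2 = b := Real.sq_sqrt hb
  have hq : Real.sqrt (b+1) ^ 2 = b+1 := Real.sq_sqrt (by linarith)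
  have hr : Real.sqrt a ^ 2 = a := Real.sq_sqrt ha
  have hs : Real.sqrt (a+1) ^ 2 = a+1 := Real.sq_sqrt (by linarith)
  have h1 : Real.sqrt b ≤ Real.sqrt a := Real.sqrt_le_sqrt h
  have h2 : Real.sqrt (b+1) ≤ Real.sqrt (a+1) := Real.sqrt_le_sqrt (by linarith)
  have h3 : (1:ℝ) ≤ Real.sqrt (b+1) := by
    nlinarith [Real.sqrt_nonneg (b+1), hq]
  have h4 : 0 ≤ Real.sqrt b := Real.sqrt_nonneg b
  have h5 : 0 ≤ Real.sqrt a := Real.sqrt_nonneg a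
  nlinarith [mul_pos (show (0:ℝ) < Real.sqrt (b+1) + Real.sqrt b by linarith)
    (show (0:ℝ) < Real.sqrt (a+1) + Real.sqrt a by linarith)]

lemma tel (S : Finset ℕ) : ∑ i ∈ S, (Real.sqrt (i+1) - Real.sqrt i) ≤ Real.sqrt S.card := by
  induction S using Finset.induction_on_max with
  | empty => simp
  | insert a S ha ih =>
    have hcard : (S.card : ℝ) ≤ (a : ℝ) := by
      have : S ⊆ Finset.range a := fun x hx => Finset.mem_range.mpr (ha x hx)
      exact_mod_cast (Finset.card_le_card this).trans_eq (Finset.card_range a)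
    rw [Finset.sum_insert (fun h => lt_irrefl a (ha a h)), Finset.card_insert_of_notMem
      (fun h => lt_irrefl a (ha a h))]
    have key : Real.sqrt (a+1) - Real.sqrt a ≤ Real.sqrt (S.card+1) - Real.sqrt S.card :=
      sqrt_gap (by positivity) hcard
    push_cast
    nlinarith [key, ih]

lemma abel2 (f W : ℕ → ℝ) (n : ℕ) :
    ∑ j ∈ Finset.range n, f (j+1) * (W j - W (j+1)) =
      ∑ j ∈ Finset.range n, W j * (f (j+1) - f j) + f 0 * W 0 - f n * W n := by
  induction n with
  | zero => simp
  | succ n ih =>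
    rw [Finset.sum_range_succ, Finset.sum_range_succ, ih]
    ring

lemma key (m : ℕ) (W : ℕ → ℝ) (hpos : ∀ j, 0 ≤ W j)
    (hmono : ∀ j, W (j+1) ≤ W j) (hzero : W m = 0) (hne : W 0 ≠ 0) :
    ∃ k, 1 ≤ k ∧ k ≤ m ∧
      Real.sqrt k * Real.sqrt (∑ j ∈ Finset.range m, (W j)^2) ≤
        (∑ j ∈ Finset.range k, W j) *
          Real.sqrt (∑ j ∈ Finset.range m, (Real.sqrt (j+1) - Real.sqrt j)^2) := by
  by_contra hc
  push_neg at hc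
  set d : ℕ → ℝ := fun j => Real.sqrt (j+1) - Real.sqrt j with hd
  set Q : ℝ := Real.sqrt (∑ j ∈ Finset.range m, (W j)^2) with hQ
  set D : ℝ := Real.sqrt (∑ j ∈ Finset.range m, d j ^2) with hD
  set S : ℕ → ℝ := fun k => ∑ j ∈ Finset.range k, W j with hS
  have hQ0 : 0 ≤ Q := Real.sqrt_nonneg _
  have hD0 : 0 ≤ D := Real.sqrt_nonneg _
  have hdpos : ∀ j, 0 ≤ d j := by
    intro j
    have : Real.sqrt j ≤ Real.sqrt (j+1) := Real.sqrt_le_sqrt (by linarith)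
    simp [hd]; linarith
  have hQsq : Q^2 = ∑ j ∈ Finset.range m, (W j)^2 := Real.sq_sqrt (by positivity)
  have hDsq : D^2 = ∑ j ∈ Finset.range m, d j ^2 := Real.sq_sqrt (by positivity)
  have habel1 : ∑ j ∈ Finset.range m, S (j+1) * (W j - W (j+1)) =
      ∑ j ∈ Finset.range m, (W j)^2 := by
    rw [abel2 S W m]
    have h1 : ∀ j, S (j+1) - S j = W j := fun j => by
      simp [hS, Finset.sum_range_succ]
    have h2 : S 0 = 0 := by simp [hS]
    simp only [h1, h2, hzero]
    simp [pow_two]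
  have habel2 : ∑ j ∈ Finset.range m, Real.sqrt (j+1) * (W j - W (j+1)) =
      ∑ j ∈ Finset.range m, W j * d j := by
    have := abel2 (fun j => Real.sqrt j) W m
    simp only [Nat.cast_add, Nat.cast_one, Nat.cast_zero, Real.sqrt_zero, zero_mul,
      hzero, mul_zero, add_zero, sub_zero] at this
    rw [this]
  have hCS : ∑ j ∈ Finset.range m, W j * d j ≤ Q * D := by
    have hsq := Finset.sum_mul_sq_le_sq_mul_sq (Finset.range m) W d
    have hnn : 0 ≤ ∑ j ∈ Finset.range m, W j * d j :=
      Finset.sum_nonneg fun j _ => mul_nonneg (hpos j) (hdpos j)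
    calc ∑ j ∈ Finset.range m, W j * d j
        = Real.sqrt ((∑ j ∈ Finset.range m, W j * d j)^2) := (Real.sqrt_sq hnn).symm
      _ ≤ Real.sqrt ((∑ j ∈ Finset.range m, (W j)^2) * ∑ j ∈ Finset.range m, d j ^2) :=
          Real.sqrt_le_sqrt hsq
      _ = Q * D := by rw [Real.sqrt_mul (by positivity)]
  have hW0 : 0 < W 0 := lt_of_le_of_ne (hpos 0) (Ne.symm hne)
  have hgapex : ∃ j ∈ Finset.range m, 0 < W j - W (j+1) := by
    by_contra hg
    push_neg at hg
    have : ∑ j ∈ Finset.range m, (W j - W (j+1)) = W 0 - W m :=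
      Finset.sum_range_sub' W m
    have hle : ∑ j ∈ Finset.range m, (W j - W (j+1)) ≤ 0 :=
      Finset.sum_nonpos fun j hj => hg j hj
    rw [this, hzero] at hle
    linarith
  have hsum : ∑ j ∈ Finset.range m, S (j+1) * (W j - W (j+1)) * D <
      ∑ j ∈ Finset.range m, Real.sqrt (j+1) * (W j - W (j+1)) * Q := by
    apply Finset.sum_lt_sum
    · intro j hj
      have hgap : 0 ≤ W j - W (j+1) := sub_nonneg.2 (hmono j)
      have h := hc (j+1) (Nat.succ_le_succ (Nat.zero_le j)) (Finset.mem_range.mp hj)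
      push_cast at h
      have h2 : S (j+1) * D ≤ Real.sqrt (j+1) * Q := h.le
      nlinarith [mul_le_mul_of_nonneg_right h2 hgap]
    · obtain ⟨j, hj, hgap⟩ := hgapex
      refine ⟨j, hj, ?_⟩
      have h := hc (j+1) (Nat.succ_le_succ (Nat.zero_le j)) (Finset.mem_range.mp hj)
      push_cast at h
      nlinarith [mul_lt_mul_of_pos_right h hgap]
  rw [← Finset.sum_mul, ← Finset.sum_mul, habel1, habel2] at hsum
  nlinarith [hsum, hCS, mul_le_mul_of_nonneg_right hCS hQ0]

end Aux

def A (m : ℕ) : Set (EuclideanSpace ℝ (Fin m)) :=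
  {v | (∀ i, v i = -1 ∨ v i = 0 ∨ v i = 1) ∧ v ≠ 0}

def B (m : ℕ) : Set (EuclideanSpace ℝ (Fin m)) :=
  (fun v => ‖v‖⁻¹ • v) '' A m

def s (m : ℕ) : ℝ :=
  sSup {r : ℝ | 0 ≤ r ∧ Metric.closedBall (0 : EuclideanSpace ℝ (Fin m)) r ⊆ convexHull ℝ (B m)}

def Dm (m : ℕ) : ℝ := Real.sqrt (∑ j ∈ Finset.range m, (Real.sqrt (j+1) - Real.sqrt j)^2)

lemma Dm_pos {m : ℕ} (hm : 1 ≤ m) : 0 < Dm m := by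
  apply Real.sqrt_pos.mpr
  have h0 : (0:ℕ) ∈ Finset.range m := Finset.mem_range.mpr hm
  have := Finset.single_le_sum (f := fun j : ℕ => (Real.sqrt (j+1) - Real.sqrt j)^2)
    (fun i _ => sq_nonneg _) h0
  simp at this
  linarith

lemma norm_A {m : ℕ} {v : EuclideanSpace ℝ (Fin m)} (hv : v ∈ A m) :
    ‖v‖ = Real.sqrt ((Finset.univ.filter (fun i => v i ≠ 0)).card) := by
  rw [EuclideanSpace.norm_eq]
  congr 1
  rw [← Finset.sum_filter_add_sum_filter_not Finset.univ (fun i => v i ≠ 0)]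
  have h2 : ∑ i ∈ Finset.univ.filter (fun i => ¬ v i ≠ 0), ‖v i‖^2 = 0 := by
    apply Finset.sum_eq_zero
    intro i hi
    simp only [Finset.mem_filter, not_not] at hi
    simp [hi.2]
  rw [h2, add_zero]
  rw [Finset.card_eq_sum_ones, Nat.cast_sum]
  apply Finset.sum_congr rfl
  intro i hi
  simp only [Finset.mem_filter] at hi
  rcases hv.1 i with h | h | h <;> simp [h] at hi ⊢

def uvec (m : ℕ) : EuclideanSpace ℝ (Fin m) :=
  WithLp.toLp 2 (fun i => (Dm m)⁻¹ * (Real.sqrt ((i:ℕ)+1) - Real.sqrt (i:ℕ)))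

lemma norm_uvec {m : ℕ} (hm : 1 ≤ m) : ‖uvec m‖ = 1 := by
  have hD := Dm_pos hm
  rw [EuclideanSpace.norm_eq]
  have : ∑ i : Fin m, ‖uvec m i‖^2
      = (Dm m)⁻¹^2 * ∑ j ∈ Finset.range m, (Real.sqrt (j+1) - Real.sqrt j)^2 := by
    rw [Finset.mul_sum, ← Fin.sum_univ_eq_sum_range
      (fun j => (Dm m)⁻¹^2 * (Real.sqrt (j+1) - Real.sqrt j)^2)]
    apply Finset.sum_congr rfl
    intro i _
    rw [Real.norm_eq_abs, sq_abs, uvec, PiLp.toLp_apply]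
    ring
  rw [this]
  have hsq : ∑ j ∈ Finset.range m, (Real.sqrt (j+1) - Real.sqrt j)^2 = (Dm m)^2 :=
    (Real.sq_sqrt (by positivity)).symm
  rw [hsq]
  rw [show ((Dm m)⁻¹^2 * (Dm m)^2) = 1 by field_simp]
  exact Real.sqrt_one

lemma udpos {m : ℕ} (hm : 1 ≤ m) (i : Fin m) : 0 ≤ uvec m i := by
  have hD := Dm_pos hm
  have : Real.sqrt (i:ℕ) ≤ Real.sqrt ((i:ℕ)+1) := Real.sqrt_le_sqrt (by linarith)
  unfold uvec
  rw [PiLp.toLp_apply]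
  have : (0:ℝ) ≤ Real.sqrt ((i:ℕ)+1) - Real.sqrt (i:ℕ) := by linarith
  positivity

lemma inner_uvec_le {m : ℕ} (hm : 1 ≤ m) {v : EuclideanSpace ℝ (Fin m)} (hv : v ∈ A m) :
    inner ℝ (uvec m) v ≤ (Dm m)⁻¹ * ‖v‖ := by
  have hD := Dm_pos hm
  rw [PiLp.inner_apply]
  set T := Finset.univ.filter (fun i : Fin m => v i ≠ 0) with hT
  have h1 : ∑ i : Fin m, inner ℝ (uvec m i) (v i) = ∑ i ∈ T, uvec m i * v i := by
    rw [← Finset.sum_filter_add_sum_filter_not Finset.univ (fun i => v i ≠ 0)]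
    have : ∑ i ∈ Finset.univ.filter (fun i => ¬ v i ≠ 0), uvec m i * v i = 0 := by
      apply Finset.sum_eq_zero
      intro i hi
      simp only [Finset.mem_filter, not_not] at hi
      simp [hi.2]
    simp only [RCLike.inner_apply, conj_trivial, mul_comm (v _)]
    rw [this, add_zero]
  rw [h1]
  have h2 : ∑ i ∈ T, uvec m i * v i ≤ ∑ i ∈ T, uvec m i := by
    apply Finset.sum_le_sum
    intro i hi
    have hvi : v i ≤ 1 := by rcases hv.1 i with h | h | h <;> simp [h]
    nlinarith [udpos hm i]
  have h3 : ∑ i ∈ T, uvec m i = (Dm m)⁻¹ * ∑ i ∈ T, (Real.sqrt ((i:ℕ)+1) - Real.sqrt (i:ℕ)) := by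
    rw [Finset.mul_sum]; rfl
  have h4 : ∑ i ∈ T, (Real.sqrt ((i:ℕ)+1) - Real.sqrt (i:ℕ)) ≤ Real.sqrt T.card := by
    have himg : ∑ i ∈ T, (Real.sqrt ((i:ℕ)+1) - Real.sqrt (i:ℕ))
        = ∑ n ∈ T.image (Fin.val), (Real.sqrt (n+1) - Real.sqrt n) := by
      rw [Finset.sum_image (fun a _ b _ h => Fin.val_injective h)]
    have hcard : (T.image (Fin.val)).card = T.card :=
      Finset.card_image_of_injective T Fin.val_injective
    rw [himg, ← hcard]
    exact tel _
  have h5 : ‖v‖ = Real.sqrt T.card := norm_A hv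
  calc ∑ i ∈ T, uvec m i * v i ≤ ∑ i ∈ T, uvec m i := h2
    _ = (Dm m)⁻¹ * ∑ i ∈ T, (Real.sqrt ((i:ℕ)+1) - Real.sqrt (i:ℕ)) := h3
    _ ≤ (Dm m)⁻¹ * Real.sqrt T.card := by
        apply mul_le_mul_of_nonneg_left h4 (by positivity)
    _ = (Dm m)⁻¹ * ‖v‖ := by rw [h5]

lemma convexHull_B_subset {m : ℕ} (hm : 1 ≤ m) :
    convexHull ℝ (B m) ⊆ {x : EuclideanSpace ℝ (Fin m) | inner ℝ (uvec m) x ≤ (Dm m)⁻¹} := by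
  apply convexHull_min
  · rintro x ⟨v, hv, rfl⟩
    have hvpos : 0 < ‖v‖ := norm_pos_iff.mpr hv.2
    simp only [Set.mem_setOf_eq, real_inner_smul_right]
    have := inner_uvec_le hm hv
    calc ‖v‖⁻¹ * inner ℝ (uvec m) v ≤ ‖v‖⁻¹ * ((Dm m)⁻¹ * ‖v‖) := by
          apply mul_le_mul_of_nonneg_left this (by positivity)
      _ = (Dm m)⁻¹ := by field_simp
  · exact convex_halfSpace_le ⟨fun x y => inner_add_right _ _ _,
      fun c x => real_inner_smul_right _ _ _⟩ _

lemma upper_bound {m : ℕ} (hm : 1 ≤ m) {r : ℝ} (hr : 0 ≤ r)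
    (h : Metric.closedBall (0 : EuclideanSpace ℝ (Fin m)) r ⊆ convexHull ℝ (B m)) :
    r ≤ (Dm m)⁻¹ := by
  have hmem : r • uvec m ∈ Metric.closedBall (0 : EuclideanSpace ℝ (Fin m)) r := by
    rw [Metric.mem_closedBall, dist_zero_right, norm_smul, norm_uvec hm,
      Real.norm_eq_abs, abs_of_nonneg hr, mul_one]
  have := convexHull_B_subset hm (h hmem)
  simp only [Set.mem_setOf_eq, real_inner_smul_right] at this
  rw [real_inner_self_eq_norm_sq, norm_uvec hm] at this
  simpa using this

lemma exists_good {m : ℕ} (hm : 1 ≤ m) {y : EuclideanSpace ℝ (Fin m)} (hy : y ≠ 0) :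
    ∃ v ∈ A m, (Dm m)⁻¹ * ‖y‖ * ‖v‖ ≤ inner ℝ y v := by
  have hD := Dm_pos hm
  set σ : Equiv.Perm (Fin m) := Tuple.sort (fun i => -|y i|) with hσ
  have hsort : ∀ (j j' : Fin m), j ≤ j' → |y (σ j')| ≤ |y (σ j)| := by
    intro j j' h
    have := Tuple.monotone_sort (fun i => -|y i|) h
    simpa using this
  set W : ℕ → ℝ := fun j => if h : j < m then |y (σ ⟨j, h⟩)| else 0 with hW
  have hWval : ∀ (i : Fin m), W (i : ℕ) = |y (σ i)| := by
    intro i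
    simp only [hW, dif_pos i.isLt]
  have hpos : ∀ j, 0 ≤ W j := by
    intro j
    simp only [hW]
    split <;> simp [abs_nonneg]
  have hmono : ∀ j, W (j+1) ≤ W j := by
    intro j
    by_cases h1 : j + 1 < m
    · have h0 : j < m := Nat.lt_of_succ_lt h1
      simp only [hW, dif_pos h1, dif_pos h0]
      exact hsort ⟨j, h0⟩ ⟨j+1, h1⟩ (by simp [Fin.le_def])
    · simp only [hW, dif_neg h1]
      exact hpos j
  have hzero : W m = 0 := by simp [hW]
  have hiy : ∃ i, y i ≠ 0 := by
    by_contra h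
    push_neg at h
    exact hy (PiLp.ext fun i => by simp [h i])
  have hne : W 0 ≠ 0 := by
    obtain ⟨i, hi⟩ := hiy
    have h0 : (0:ℕ) < m := hm
    have : |y (σ (σ.symm i))| ≤ |y (σ ⟨0, h0⟩)| := hsort _ _ (by simp [Fin.le_def])
    rw [Equiv.apply_symm_apply] at this
    have : 0 < W 0 := by
      rw [show ((0:ℕ)) = ((⟨0,h0⟩ : Fin m) : ℕ) from rfl, hWval]
      have := abs_pos.mpr hi
      linarith
    linarith
  have hQ : Real.sqrt (∑ j ∈ Finset.range m, (W j)^2) = ‖y‖ := by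
    rw [EuclideanSpace.norm_eq]
    congr 1
    rw [← Fin.sum_univ_eq_sum_range (fun j => (W j)^2)]
    rw [← Equiv.sum_comp σ (fun i => ‖y i‖^2)]
    apply Finset.sum_congr rfl
    intro i _
    simp [hWval, Real.norm_eq_abs]
  obtain ⟨k, hk1, hkm, hkey⟩ := key m W hpos hmono hzero hne
  set v : EuclideanSpace ℝ (Fin m) :=
    WithLp.toLp 2 (fun i => if ((σ.symm i : Fin m) : ℕ) < k then (if y i < 0 then (-1:ℝ) else 1) else 0) with hv
  have hvval : ∀ i, v i = if ((σ.symm i : Fin m) : ℕ) < k then (if y i < 0 then (-1:ℝ) else 1) else 0 :=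
    fun i => rfl
  have hvA : v ∈ A m := by
    constructor
    · intro i
      rw [hvval]
      split_ifs <;> simp
    · intro h0
      have h0m : (0:ℕ) < m := hm
      have hi0 : v (σ ⟨0, h0m⟩) = 0 := by rw [h0]; rfl
      rw [hvval] at hi0
      rw [Equiv.symm_apply_apply] at hi0
      rw [if_pos (show ((⟨0,h0m⟩ : Fin m) : ℕ) < k from hk1)] at hi0
      split_ifs at hi0 <;> norm_num at hi0
  have hfilter : (Finset.range m).filter (fun j => j < k) = Finset.range k := by
    ext j
    simp only [Finset.mem_filter, Finset.mem_range]
    omega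
  have hnormv : ‖v‖ = Real.sqrt k := by
    rw [EuclideanSpace.norm_eq]
    congr 1
    have h1 : ∀ i : Fin m, ‖v i‖^2 = (fun j : Fin m => if ((j : Fin m) : ℕ) < k then (1:ℝ) else 0) (σ.symm i) := by
      intro i
      rw [hvval]
      split_ifs with h h2 <;> simp [h]
    rw [Finset.sum_congr rfl (fun i _ => h1 i)]
    rw [Equiv.sum_comp σ.symm (fun j : Fin m => if ((j : Fin m) : ℕ) < k then (1:ℝ) else 0)]
    rw [Fin.sum_univ_eq_sum_range (fun j : ℕ => if j < k then (1:ℝ) else 0)]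
    rw [← Finset.sum_filter, hfilter]
    simp
  have hinner : (inner ℝ y v : ℝ) = ∑ j ∈ Finset.range k, W j := by
    rw [PiLp.inner_apply]
    have h1 : ∀ i : Fin m, (inner ℝ (y i) (v i) : ℝ)
        = (fun j : Fin m => if ((j : Fin m) : ℕ) < k then |y (σ j)| else 0) (σ.symm i) := by
      intro i
      simp only [RCLike.inner_apply, conj_trivial, Equiv.apply_symm_apply]
      rw [hvval]
      split_ifs with h h2
      · rw [abs_of_neg h2]; ring
      · rw [abs_of_nonneg (not_lt.mp h2)]; ring
      · ring
    rw [Finset.sum_congr rfl (fun i _ => h1 i)]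
    rw [Equiv.sum_comp σ.symm (fun j : Fin m => if ((j : Fin m) : ℕ) < k then |y (σ j)| else 0)]
    have h2 : ∀ j : Fin m, (if ((j : Fin m) : ℕ) < k then |y (σ j)| else 0)
        = (fun n : ℕ => if n < k then W n else 0) (j : ℕ) := by
      intro j
      simp only [hWval]
    rw [Finset.sum_congr rfl (fun j _ => h2 j)]
    rw [Fin.sum_univ_eq_sum_range (fun n : ℕ => if n < k then W n else 0)]
    rw [← Finset.sum_filter, hfilter]
  refine ⟨v, hvA, ?_⟩
  rw [hinner, hnormv]
  rw [← hQ]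
  rw [inv_mul_eq_div, div_mul_eq_mul_div, div_le_iff₀ hD]
  calc Real.sqrt (∑ j ∈ Finset.range m, (W j)^2) * Real.sqrt k
      = Real.sqrt k * Real.sqrt (∑ j ∈ Finset.range m, (W j)^2) := by ring
    _ ≤ (∑ j ∈ Finset.range k, W j) * Dm m := hkey

lemma A_finite (m : ℕ) : (A m).Finite := by
  have hfin : (Set.pi Set.univ (fun _ : Fin m => ({-1, 0, 1} : Set ℝ))).Finite :=
    Set.Finite.pi (fun i => (Set.finite_singleton 1).insert 0 |>.insert (-1))
  apply (hfin.image (WithLp.toLp 2)).subset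
  intro v hv
  refine ⟨WithLp.ofLp v, ?_, rfl⟩
  intro i _
  rcases hv.1 i with h | h | h <;> simp [h]

lemma lower_bound {m : ℕ} (hm : 1 ≤ m) {x : EuclideanSpace ℝ (Fin m)}
    (hx : ‖x‖ ≤ (Dm m)⁻¹) : x ∈ convexHull ℝ (B m) := by
  have hD := Dm_pos hm
  by_contra hxc
  have hBfin : (B m).Finite := (A_finite m).image _
  have hclosed : IsClosed (convexHull ℝ (B m)) :=
    (hBfin.isCompact_convexHull ℝ).isClosed
  obtain ⟨f, t, hft, htx⟩ := geometric_hahn_banach_closed_point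
    (convex_convexHull ℝ (B m)) hclosed hxc
  set y : EuclideanSpace ℝ (Fin m) := (InnerProductSpace.toDual ℝ _).symm f with hyd
  have hyf : ∀ z, (inner ℝ y z : ℝ) = f z := fun z => InnerProductSpace.toDual_symm_apply
  -- B is nonempty
  have h0m : (0:ℕ) < m := hm
  set v₀ : EuclideanSpace ℝ (Fin m) := WithLp.toLp 2 (fun _ => 1) with hv₀
  have hv₀A : v₀ ∈ A m := by
    constructor
    · intro i; right; right; rfl
    · intro h
      have := congrArg (fun w : EuclideanSpace ℝ (Fin m) => w ⟨0, h0m⟩) h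
      norm_num at this
  have hb₀ : ‖v₀‖⁻¹ • v₀ ∈ convexHull ℝ (B m) :=
    subset_convexHull ℝ _ ⟨v₀, hv₀A, rfl⟩
  have hy0 : y ≠ 0 := by
    intro h0
    have h1 : f (‖v₀‖⁻¹ • v₀) < t := hft _ hb₀
    have h2 : (inner ℝ y (‖v₀‖⁻¹ • v₀) : ℝ) = 0 := by rw [h0]; exact inner_zero_left _
    have h3 : (inner ℝ y x : ℝ) = 0 := by rw [h0]; exact inner_zero_left _
    rw [hyf] at h2 h3
    rw [h2] at h1
    rw [h3] at htx
    linarith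
  obtain ⟨v, hvA, hgood⟩ := exists_good hm hy0
  have hvpos : 0 < ‖v‖ := norm_pos_iff.mpr hvA.2
  have hb : ‖v‖⁻¹ • v ∈ convexHull ℝ (B m) :=
    subset_convexHull ℝ _ ⟨v, hvA, rfl⟩
  have h1 : f (‖v‖⁻¹ • v) < t := hft _ hb
  have h2 : (Dm m)⁻¹ * ‖y‖ ≤ f (‖v‖⁻¹ • v) := by
    rw [← hyf, real_inner_smul_right]
    have := mul_le_mul_of_nonneg_left hgood (le_of_lt (inv_pos.mpr hvpos))
    calc (Dm m)⁻¹ * ‖y‖ = ‖v‖⁻¹ * ((Dm m)⁻¹ * ‖y‖ * ‖v‖) := by field_simp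
      _ ≤ ‖v‖⁻¹ * inner ℝ y v := this
  have h3 : f x ≤ ‖y‖ * (Dm m)⁻¹ := by
    rw [← hyf]
    calc (inner ℝ y x : ℝ) ≤ ‖y‖ * ‖x‖ := real_inner_le_norm y x
      _ ≤ ‖y‖ * (Dm m)⁻¹ := mul_le_mul_of_nonneg_left hx (norm_nonneg y)
  linarith

theorem stmt11 (m : ℕ) (hm : 2 ≤ m) :
    s m = (Real.sqrt (∑ k ∈ Finset.range m, 1 / (Real.sqrt (k + 1) + Real.sqrt k) ^ 2))⁻¹ := by
  have hm1 : 1 ≤ m := le_trans (by norm_num) hm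
  have hD := Dm_pos hm1
  have hsum : ∑ k ∈ Finset.range m, 1 / (Real.sqrt (k + 1) + Real.sqrt k) ^ 2
      = ∑ k ∈ Finset.range m, (Real.sqrt (k+1) - Real.sqrt k)^2 := by
    apply Finset.sum_congr rfl
    intro k _
    have ha : Real.sqrt ((k:ℝ)+1) ^ 2 = (k:ℝ)+1 := Real.sq_sqrt (by positivity)
    have hb : Real.sqrt (k:ℝ) ^ 2 = (k:ℝ) := Real.sq_sqrt (by positivity)
    have h1 : (1:ℝ) ≤ Real.sqrt ((k:ℝ)+1) := by
      nlinarith [Real.sqrt_nonneg ((k:ℝ)+1)]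
    have h2 : 0 ≤ Real.sqrt (k:ℝ) := Real.sqrt_nonneg _
    rw [div_eq_iff (by positivity)]
    nlinarith
  have hgoal : (Real.sqrt (∑ k ∈ Finset.range m, 1 / (Real.sqrt (k + 1) + Real.sqrt k) ^ 2))⁻¹
      = (Dm m)⁻¹ := by
    rw [hsum]; rfl
  rw [hgoal]
  unfold s
  apply le_antisymm
  · apply csSup_le
    · exact ⟨(Dm m)⁻¹, by positivity, fun x hx =>
        lower_bound hm1 (by simpa [Metric.mem_closedBall, dist_zero_right] using hx)⟩
    · rintro r ⟨hr0, hr⟩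
      exact upper_bound hm1 hr0 hr
  · apply le_csSup
    · exact ⟨(Dm m)⁻¹, fun r hr => upper_bound hm1 hr.1 hr.2⟩
    · exact ⟨by positivity, fun x hx =>
        lower_bound hm1 (by simpa [Metric.mem_closedBall, dist_zero_right] using hx)⟩
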